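/- For d ≥ 3, fix 1 ≤ α ≤ d and z ∈ ℝ^d, and let v(x) = ∂/∂x_α (|x − z|^{2−d}) = (2−d)(x_α − z_α)|x − z|^{−d}. Then ∑_{g∈ℤ^d} ‖v‖_{L²([0,1)^d+g)} = ∞; i.e., the dipole potential v does not lie in the ℓ¹-type space V¹₀. -/

import Mathlib

open MeasureTheory

/-- The Euclidean norm of `x ∈ ℝ^d`. -/
noncomputable def enorm' {d : ℕ} (x : Fin d → ℝ) : ℝ :=
  Real.sqrt (∑ i, x i ^ 2)

/-- The unit cube `[0,1)^d + g`. -/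
def cube {d : ℕ} (g : Fin d → ℤ) : Set (Fin d → ℝ) :=
  Set.univ.pi fun i => Set.Ico (g i : ℝ) ((g i : ℝ) + 1)

lemma abs_le_enorm' {d : ℕ} (x : Fin d → ℝ) (i : Fin d) : |x i| ≤ enorm' x := by
  rw [← Real.sqrt_sq_eq_abs]
  exact Real.sqrt_le_sqrt
    (Finset.single_le_sum (fun j _ => sq_nonneg (x j)) (Finset.mem_univ i))

lemma enorm'_le {d : ℕ} (x : Fin d → ℝ) {M : ℝ} (hM : 0 ≤ M) (h : ∀ i, |x i| ≤ M) :
    enorm' x ≤ Real.sqrt d * M := by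
  have hsum : ∑ i, x i ^ 2 ≤ ∑ _i : Fin d, M ^ 2 := by
    refine Finset.sum_le_sum fun i _ => ?_
    have := abs_le.mp (h i)
    nlinarith [this.1, this.2]
  calc enorm' x ≤ Real.sqrt (∑ _i : Fin d, M ^ 2) := Real.sqrt_le_sqrt hsum
    _ = Real.sqrt ((d : ℝ) * M ^ 2) := by
        rw [Finset.sum_const, Finset.card_univ, Fintype.card_fin, nsmul_eq_mul]
    _ = Real.sqrt d * M := by
        rw [Real.sqrt_mul (Nat.cast_nonneg d), Real.sqrt_sq hM]

set_option maxHeartbeats 1600000 in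
/-- **Dipole potentials are not `ℓ¹`-summable over cubes.** For `d ≥ 3`, `z ∈ ℝ^d`
and `1 ≤ α ≤ d`, the dipole potential
`v(x) = ∂/∂x_α |x−z|^{2−d} = (2−d)(x_α − z_α)|x−z|^{−d}` satisfies
`∑_{g∈ℤ^d} ‖v‖_{L²([0,1)^d+g)} = ∞`. -/
theorem dipole_not_summable (d : ℕ) (hd : 3 ≤ d) (α : Fin d) (z : Fin d → ℝ) :
    ¬ Summable (fun g : Fin d → ℤ =>
      Real.sqrt (∫ x in cube g,
        |((2 : ℝ) - d) * (x α - z α) * enorm' (fun i => x i - z i) ^ (-(d : ℝ))| ^ 2)) := by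
  intro hsum
  set f : (Fin d → ℤ) → ℝ := fun g =>
    Real.sqrt (∫ x in cube g,
      |((2 : ℝ) - d) * (x α - z α) * enorm' (fun i => x i - z i) ^ (-(d : ℝ))| ^ 2) with hfdef
  have hf0 : ∀ g, 0 ≤ f g := fun g => Real.sqrt_nonneg _
  have hdR : (3 : ℝ) ≤ d := by exact_mod_cast hd
  set Z : ℝ := ∑ i, |z i| with hZdef
  have hZ0 : 0 ≤ Z := Finset.sum_nonneg fun i _ => abs_nonneg _
  have hZi : ∀ i, |z i| ≤ Z := by
    rw [hZdef]
    exact fun i => Finset.single_le_sum (f := fun j => |z j|) (fun j _ => abs_nonneg _)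
      (Finset.mem_univ i)
  set C : ℝ := Z + 2 with hCdef
  have hC : 0 < C := by positivity
  have hsd : 0 < Real.sqrt d := Real.sqrt_pos.mpr (by positivity)
  have hsdC : 0 < Real.sqrt d * C := mul_pos hsd hC
  set K : ℝ := (Real.sqrt d * C) ^ (-(d : ℝ)) with hKdef
  have hK : 0 < K := Real.rpow_pos_of_pos hsdC _
  set c : ℝ := K / 2 with hcdef
  have hc : 0 < c := by positivity
  set N₀ : ℕ := ⌈2 * Z⌉₊ + 1 with hN₀def
  have hN₀Z : 2 * Z ≤ (N₀ : ℝ) := by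
    calc 2 * Z ≤ (⌈2 * Z⌉₊ : ℝ) := Nat.le_ceil _
      _ ≤ (N₀ : ℝ) := by exact_mod_cast Nat.le_succ _
  have hN₀1 : 1 ≤ N₀ := Nat.le_add_left 1 _
  -- the slices
  set S : ℕ → Finset (Fin d → ℤ) := fun n =>
    Finset.Icc (Function.update (fun _ => (1 : ℤ)) α (n : ℤ)) (fun _ => (n : ℤ)) with hSdef
  have hmem : ∀ n : ℕ, 1 ≤ n → ∀ g, g ∈ S n ↔ (g α = (n : ℤ) ∧ ∀ i, 1 ≤ g i ∧ g i ≤ (n : ℤ)) := by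
    intro n hn1' g
    rw [hSdef]
    simp only [Finset.mem_Icc, Pi.le_def]
    constructor
    · rintro ⟨h1, h2⟩
      have hα : g α = (n : ℤ) := le_antisymm (h2 α) (by simpa using h1 α)
      refine ⟨hα, fun i => ⟨?_, h2 i⟩⟩
      rcases eq_or_ne i α with rfl | hne
      · rw [hα]; exact_mod_cast hn1'
      · simpa [Function.update_of_ne hne] using h1 i
    · rintro ⟨hα, h⟩
      refine ⟨fun i => ?_, fun i => (h i).2⟩
      rcases eq_or_ne i α with rfl | hne
      · simp [hα]
      · simpa [Function.update_of_ne hne] using (h i).1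
  -- cardinality of slices
  have hcard : ∀ n : ℕ, (S n).card = n ^ (d - 1) := by
    intro n
    rw [hSdef]
    rw [Pi.card_Icc]
    have hfac : ∀ i : Fin d,
        (Finset.Icc (Function.update (fun _ => (1 : ℤ)) α (n : ℤ) i) ((n : ℤ))).card
          = if i = α then 1 else n := by
      intro i
      rcases eq_or_ne i α with rfl | hne
      · simp [Int.card_Icc]
      · simp [Function.update_of_ne hne, Int.card_Icc, hne]
    rw [Finset.prod_congr rfl fun i _ => hfac i]
    rw [Fintype.prod_eq_mul_prod_compl α]
    rw [if_pos rfl, one_mul]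
    rw [Finset.prod_congr rfl (g := fun _ => n) fun i hi => if_neg (by simpa using hi),
      Finset.prod_const, Finset.card_compl, Finset.card_singleton, Fintype.card_fin]
  -- the key lower bound on f over a slice member
  have key : ∀ n : ℕ, N₀ ≤ n → ∀ g ∈ S n,
      (n : ℝ) / 2 * (Real.sqrt d * C * n) ^ (-(d : ℝ)) ≤ f g := by
    intro n hn g hg
    obtain ⟨hgα, hgi⟩ := (hmem n (le_trans hN₀1 hn) g).mp hg
    have hnN : (N₀ : ℝ) ≤ (n : ℝ) := by exact_mod_cast hn
    have hn1 : (1 : ℝ) ≤ (n : ℝ) := by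
      have : (1 : ℕ) ≤ n := le_trans hN₀1 hn
      exact_mod_cast this
    have hn2Z : 2 * Z ≤ (n : ℝ) := le_trans hN₀Z hnN
    set b : ℝ := (n : ℝ) / 2 * (Real.sqrt d * C * n) ^ (-(d : ℝ)) with hbdef
    have hb0 : 0 ≤ b := by positivity
    set lo : Fin d → ℝ := fun i => (g i : ℝ) with hlodef
    set hi : Fin d → ℝ := fun i => (g i : ℝ) + 1 with hhidef
    -- positivity of the α-component on the closed cube
    have htlb : ∀ x ∈ Set.Icc lo hi, (n : ℝ) / 2 ≤ x α - z α := by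
      intro x hx
      rw [Set.mem_Icc] at hx
      have h1 : (n : ℝ) ≤ x α := by
        have := hx.1 α
        rw [hlodef] at this
        simp only at this
        rw [hgα] at this
        exact_mod_cast this
      have h2 : z α ≤ Z := le_trans (le_abs_self _) (hZi α)
      linarith
    have hpos : ∀ x ∈ Set.Icc lo hi, 0 < enorm' (fun i => x i - z i) := by
      intro x hx
      have ht := htlb x hx
      have : x α - z α ≤ enorm' (fun i => x i - z i) :=
        le_trans (le_abs_self _) (abs_le_enorm' (fun i => x i - z i) α)
      linarith
    -- pointwise lower bound on the closed cube
    have hpt : ∀ x ∈ Set.Icc lo hi,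
        b ≤ |((2 : ℝ) - d) * (x α - z α) * enorm' (fun i => x i - z i) ^ (-(d : ℝ))| := by
      intro x hx
      have ht := htlb x hx
      have hen0 := hpos x hx
      have ht0 : 0 < x α - z α := lt_of_lt_of_le (by linarith) ht
      rw [Set.mem_Icc] at hx
      have hyub : ∀ i, |x i - z i| ≤ C * n := by
        intro i
        have h1 : (1 : ℝ) ≤ (g i : ℝ) := by exact_mod_cast (hgi i).1
        have h2 : (g i : ℝ) ≤ (n : ℝ) := by exact_mod_cast (hgi i).2
        have h3 := hx.1 i
        have h4 := hx.2 i
        rw [hlodef] at h3; rw [hhidef] at h4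
        simp only at h3 h4
        have h5 := abs_le.mp (hZi i)
        rw [abs_le, hCdef]
        constructor <;> nlinarith [h5.1, h5.2]
      have henub : enorm' (fun i => x i - z i) ≤ Real.sqrt d * (C * n) :=
        enorm'_le _ (by positivity) hyub
      have hrw : (Real.sqrt d * C * n) ^ (-(d : ℝ))
          ≤ enorm' (fun i => x i - z i) ^ (-(d : ℝ)) := by
        apply Real.rpow_le_rpow_of_nonpos hen0 (by rw [mul_assoc]; exact henub)
        simp [Nat.cast_nonneg]
      have hd2 : |(2 : ℝ) - d| = (d : ℝ) - 2 := by
        rw [abs_of_nonpos (by linarith)]; ring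
      have hrp0 : 0 < enorm' (fun i => x i - z i) ^ (-(d : ℝ)) :=
        Real.rpow_pos_of_pos hen0 _
      rw [abs_mul, abs_mul, hd2, abs_of_pos ht0, abs_of_pos hrp0]
      calc b = 1 * ((n : ℝ) / 2) * ((Real.sqrt d * C * n) ^ (-(d : ℝ))) := by
            rw [hbdef]; ring
        _ ≤ ((d : ℝ) - 2) * (x α - z α) * enorm' (fun i => x i - z i) ^ (-(d : ℝ)) := by
            have hn0' : (0 : ℝ) < (n : ℝ) := by linarith
            have hx0 : (0 : ℝ) < Real.sqrt d * C * n := mul_pos hsdC hn0'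
            apply mul_le_mul _ hrw (Real.rpow_pos_of_pos hx0 _).le
              (mul_nonneg (by linarith) ht0.le)
            exact mul_le_mul (by linarith) ht (by positivity) (by linarith)
    -- integral lower bound
    have hmeasc : MeasurableSet (cube g) := MeasurableSet.univ_pi fun i => measurableSet_Ico
    have hvol : volume (cube g) = 1 := by
      rw [cube, volume_pi_pi]
      simp [Real.volume_Ico]
    have hsub : cube g ⊆ Set.Icc lo hi := by
      intro x hx
      rw [Set.mem_Icc]
      constructor <;> intro i
      · exact (hx i (Set.mem_univ i)).1
      · exact le_of_lt (hx i (Set.mem_univ i)).2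
    have hcont : ContinuousOn (fun x : Fin d → ℝ =>
        |((2 : ℝ) - d) * (x α - z α) * enorm' (fun i => x i - z i) ^ (-(d : ℝ))| ^ 2)
        (Set.Icc lo hi) := by
      apply ContinuousOn.pow
      apply ContinuousOn.abs
      apply ContinuousOn.mul
      · exact (continuous_const.mul ((continuous_apply α).sub continuous_const)).continuousOn
      · apply ContinuousOn.rpow_const
        · show ContinuousOn (fun x : Fin d → ℝ => Real.sqrt (∑ i, (x i - z i) ^ 2)) _
          exact (Real.continuous_sqrt.comp (continuous_finset_sum _ fun i _ =>
            ((continuous_apply i).sub continuous_const).pow 2)).continuousOn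
        · intro x hx
          exact Or.inl (ne_of_gt (hpos x hx))
    have hint : IntegrableOn (fun x : Fin d → ℝ =>
        |((2 : ℝ) - d) * (x α - z α) * enorm' (fun i => x i - z i) ^ (-(d : ℝ))| ^ 2)
        (cube g) :=
      (hcont.integrableOn_compact isCompact_Icc).mono_set hsub
    have h1 : b ^ 2 * (volume (cube g)).toReal ≤ ∫ x in cube g,
        |((2 : ℝ) - d) * (x α - z α) * enorm' (fun i => x i - z i) ^ (-(d : ℝ))| ^ 2 := by
      apply setIntegral_ge_of_const_le_real hmeasc (by rw [hvol]; exact ENNReal.one_ne_top)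
        (fun x hx => pow_le_pow_left₀ hb0 (hpt x (hsub hx)) 2) hint
    rw [hvol] at h1
    simp only [ENNReal.toReal_one, mul_one] at h1
    calc b = Real.sqrt (b ^ 2) := (Real.sqrt_sq hb0).symm
      _ ≤ f g := Real.sqrt_le_sqrt h1
  -- slice sums are bounded below by c
  have hslice : ∀ n : ℕ, N₀ ≤ n → c ≤ ∑ g ∈ S n, f g := by
    intro n hn
    have hn1 : (1 : ℝ) ≤ (n : ℝ) := by
      have : (1 : ℕ) ≤ n := le_trans hN₀1 hn
      exact_mod_cast this
    have hn0 : (0 : ℝ) < (n : ℝ) := by linarith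
    have hsum1 : (S n).card •
        ((n : ℝ) / 2 * (Real.sqrt d * C * n) ^ (-(d : ℝ))) ≤ ∑ g ∈ S n, f g :=
      Finset.card_nsmul_le_sum (S n) f _ (key n hn)
    rw [hcard n, nsmul_eq_mul] at hsum1
    refine le_trans (le_of_eq ?_) hsum1
    push_cast
    rw [show Real.sqrt d * C * (n : ℝ) = (Real.sqrt d * C) * (n : ℝ) from rfl,
      Real.mul_rpow hsdC.le (Nat.cast_nonneg n)]
    have hexp : (n : ℝ) ^ (d - 1 : ℕ) * (n : ℝ) * (n : ℝ) ^ (-(d : ℝ)) = 1 := by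
      rw [show (n : ℝ) ^ (d - 1 : ℕ) = (n : ℝ) ^ ((d - 1 : ℕ) : ℝ) from
        (Real.rpow_natCast _ _).symm]
      rw [← Real.rpow_add_one hn0.ne', ← Real.rpow_add hn0]
      rw [show ((d - 1 : ℕ) : ℝ) + 1 + -(d : ℝ) = 0 from by
        rw [Nat.cast_sub (by omega)]; push_cast; ring]
      exact Real.rpow_zero _
    rw [hcdef, hKdef]
    rw [show (n : ℝ) ^ (d - 1 : ℕ) * ((n : ℝ) / 2 *
        ((Real.sqrt d * C) ^ (-(d : ℝ)) * (n : ℝ) ^ (-(d : ℝ))))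
        = (Real.sqrt d * C) ^ (-(d : ℝ)) / 2 *
          ((n : ℝ) ^ (d - 1 : ℕ) * (n : ℝ) * (n : ℝ) ^ (-(d : ℝ))) from by ring,
      hexp, mul_one]
  -- contradiction
  obtain ⟨k, hk⟩ := exists_nat_gt ((∑' g, f g) / c)
  have hklt : (∑' g, f g) < k * c := by
    rwa [div_lt_iff₀ hc] at hk
  have hdisj : (↑(Finset.Ico N₀ (N₀ + k)) : Set ℕ).PairwiseDisjoint S := by
    intro m hm n hn' hmn
    have hm1 : 1 ≤ m := le_trans hN₀1 (Finset.mem_Ico.mp (Finset.mem_coe.mp hm)).1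
    have hn1' : 1 ≤ n := le_trans hN₀1 (Finset.mem_Ico.mp (Finset.mem_coe.mp hn')).1
    rw [Function.onFun, Finset.disjoint_left]
    intro g hgm hgn
    apply hmn
    have h1 := ((hmem m hm1 g).mp hgm).1
    have h2 := ((hmem n hn1' g).mp hgn).1
    omega
  have hbig : (k : ℝ) * c ≤ ∑' g, f g := by
    calc (k : ℝ) * c = ∑ _n ∈ Finset.Ico N₀ (N₀ + k), c := by
          rw [Finset.sum_const, Nat.card_Ico, nsmul_eq_mul]
          congr 1
          rw [Nat.add_sub_cancel_left]
      _ ≤ ∑ n ∈ Finset.Ico N₀ (N₀ + k), ∑ g ∈ S n, f g :=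
          Finset.sum_le_sum fun n hn => hslice n (Finset.mem_Ico.mp hn).1
      _ = ∑ g ∈ (Finset.Ico N₀ (N₀ + k)).biUnion S, f g :=
          (Finset.sum_biUnion hdisj).symm
      _ ≤ ∑' g, f g := Summable.sum_le_tsum _ (fun g _ => hf0 g) hsum
  linarith
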